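/- A unit-speed curve ψ in ℝ³ with nonvanishing curvature κ and torsion τ is a general helix (i.e. τ/κ is constant) if and only if its modified-frame tangent T = ψ' satisfies T''' = μN + (3κ'/κ)N', where N = T' and μ = κ''/κ - κ² - τ² - 3(κ'/κ)². -/

import Mathlib

open scoped RealInnerProductSpace

/-- A unit speed curve `ψ` is a general helix (`τ/κ` constant) with respect to the modified
orthogonal frame if and only if `T''' = μ N + (3κ'/κ) N'` where
`μ = κ''/κ - κ² - τ² - 3(κ'/κ)²`. -/
theorem general_helix_iff_third_derivative
    (a b : ℝ) (hab : a < b)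
    (ψ T N B : ℝ → EuclideanSpace ℝ (Fin 3)) (κ κ' κ'' τ τ' : ℝ → ℝ)
    (hκpos : ∀ s ∈ Set.Ioo a b, 0 < κ s)
    (hψ : ∀ s ∈ Set.Ioo a b, HasDerivAt ψ (T s) s)
    (hunit : ∀ s ∈ Set.Ioo a b, ‖T s‖ = 1)
    (hT : ∀ s ∈ Set.Ioo a b, HasDerivAt T (N s) s)
    (hN : ∀ s ∈ Set.Ioo a b,
      HasDerivAt N (-(κ s ^ 2) • T s + (κ' s / κ s) • N s + τ s • B s) s)
    (hB : ∀ s ∈ Set.Ioo a b, HasDerivAt B (-τ s • N s + (κ' s / κ s) • B s) s)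
    (hκ : ∀ s ∈ Set.Ioo a b, HasDerivAt κ (κ' s) s)
    (hκ' : ∀ s ∈ Set.Ioo a b, HasDerivAt κ' (κ'' s) s)
    (hτ : ∀ s ∈ Set.Ioo a b, HasDerivAt τ (τ' s) s)
    (hτ0 : ∀ s ∈ Set.Ioo a b, τ s ≠ 0) :
    (∃ c : ℝ, ∀ s ∈ Set.Ioo a b, τ s = c * κ s) ↔
      (∀ s ∈ Set.Ioo a b,
        deriv (deriv (deriv T)) s =
          (κ'' s / κ s - κ s ^ 2 - τ s ^ 2 - 3 * (κ' s / κ s) ^ 2) • N s +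
            (3 * κ' s / κ s) • deriv N s) := by
  have hIopen : IsOpen (Set.Ioo a b) := isOpen_Ioo
  -- the second derivative of `T`
  have h2 : ∀ t ∈ Set.Ioo a b, deriv (deriv T) t =
      -(κ t ^ 2) • T t + (κ' t / κ t) • N t + τ t • B t := by
    intro t ht
    have e1 : deriv T =ᶠ[nhds t] N :=
      Filter.eventuallyEq_of_mem (hIopen.mem_nhds ht) (fun u hu => (hT u hu).deriv)
    rw [e1.deriv_eq, (hN t ht).deriv]
  -- the key pointwise equivalence
  have main : ∀ s ∈ Set.Ioo a b,
      ((deriv (deriv (deriv T)) s =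
          (κ'' s / κ s - κ s ^ 2 - τ s ^ 2 - 3 * (κ' s / κ s) ^ 2) • N s +
            (3 * κ' s / κ s) • deriv N s) ↔
        (τ' s * κ s - τ s * κ' s) • B s = 0) := by
    intro s hs
    have hκne : κ s ≠ 0 := (hκpos s hs).ne'
    have hD : HasDerivAt (fun t => -(κ t ^ 2) • T t + (κ' t / κ t) • N t + τ t • B t)
        (((-(κ s ^ 2)) • N s + (-(2 * κ s * κ' s)) • T s +
          ((κ' s / κ s) • (-(κ s ^ 2) • T s + (κ' s / κ s) • N s + τ s • B s) +
            ((κ'' s * κ s - κ' s * κ' s) / κ s ^ 2) • N s)) +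
          (τ s • (-τ s • N s + (κ' s / κ s) • B s) + τ' s • B s)) s := by
      have d1 := (((hκ s hs).pow 2).neg).smul (hT s hs)
      have d2 := ((hκ' s hs).div (hκ s hs) hκne).smul (hN s hs)
      have d3 := (hτ s hs).smul (hB s hs)
      refine ((d1.add d2).add d3).congr_deriv ?_
      simp only [Pi.pow_apply, Pi.neg_apply, Pi.div_apply]
      match_scalars <;> push_cast <;> ring
    have e2 : deriv (deriv T) =ᶠ[nhds s]
        fun t => -(κ t ^ 2) • T t + (κ' t / κ t) • N t + τ t • B t :=
      Filter.eventuallyEq_of_mem (hIopen.mem_nhds hs) h2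
    rw [e2.deriv_eq, hD.deriv, (hN s hs).deriv]
    have key : ((-(κ s ^ 2)) • N s + (-(2 * κ s * κ' s)) • T s +
          ((κ' s / κ s) • (-(κ s ^ 2) • T s + (κ' s / κ s) • N s + τ s • B s) +
            ((κ'' s * κ s - κ' s * κ' s) / κ s ^ 2) • N s) +
          (τ s • (-τ s • N s + (κ' s / κ s) • B s) + τ' s • B s)) -
        ((κ'' s / κ s - κ s ^ 2 - τ s ^ 2 - 3 * (κ' s / κ s) ^ 2) • N s +
          (3 * κ' s / κ s) • (-(κ s ^ 2) • T s + (κ' s / κ s) • N s + τ s • B s)) =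
        (κ s)⁻¹ • ((τ' s * κ s - τ s * κ' s) • B s) := by
      match_scalars <;> field_simp <;> ring
    constructor
    · intro hEq
      have h0 : (κ s)⁻¹ • ((τ' s * κ s - τ s * κ' s) • B s) = 0 := by
        rw [← key, hEq, sub_self]
      have h1 : κ s • ((κ s)⁻¹ • ((τ' s * κ s - τ s * κ' s) • B s)) =
          (τ' s * κ s - τ s * κ' s) • B s := by
        rw [smul_smul, mul_inv_cancel₀ hκne, one_smul]
      rw [← h1, h0, smul_zero]
    · intro h0
      rw [← sub_eq_zero, key, h0, smul_zero]
  constructor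
  · rintro ⟨c, hc⟩ s hs
    have hτ' : τ' s = c * κ' s := by
      have h1 : HasDerivAt τ (c * κ' s) s := by
        refine HasDerivAt.congr_of_eventuallyEq (((hκ s hs).const_mul c)) ?_
        exact Filter.eventuallyEq_of_mem (hIopen.mem_nhds hs) (fun t ht => hc t ht)
      exact (hτ s hs).unique h1
    refine (main s hs).mpr ?_
    rw [hτ', hc s hs]
    have : c * κ' s * κ s - c * κ s * κ' s = 0 := by ring
    rw [this, zero_smul]
  · intro h
    have hg : ∀ s ∈ Set.Ioo a b, (τ' s * κ s - τ s * κ' s) • B s = 0 :=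
      fun s hs => (main s hs).mp (h s hs)
    -- inner product facts
    have hTT : ∀ s ∈ Set.Ioo a b, (inner ℝ (T s) (T s) : ℝ) = 1 := by
      intro s hs
      rw [real_inner_self_eq_norm_sq, hunit s hs]; norm_num
    have hTN : ∀ s ∈ Set.Ioo a b, (inner ℝ (T s) (N s) : ℝ) = 0 := by
      intro s hs
      have hd := HasDerivAt.inner ℝ (hT s hs) (hT s hs)
      have he : (fun t => (inner ℝ (T t) (T t) : ℝ)) =ᶠ[nhds s] fun _ => 1 :=
        Filter.eventuallyEq_of_mem (hIopen.mem_nhds hs) (fun t ht => hTT t ht)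
      have h0 : HasDerivAt (fun t => (inner ℝ (T t) (T t) : ℝ)) 0 s :=
        (hasDerivAt_const s (1 : ℝ)).congr_of_eventuallyEq he
      have huniq := hd.unique h0
      have h2' : (inner ℝ (T s) (N s) : ℝ) + (inner ℝ (N s) (T s) : ℝ) = 0 := huniq
      have hcomm : (inner ℝ (N s) (T s) : ℝ) = (inner ℝ (T s) (N s) : ℝ) := real_inner_comm _ _
      linarith [h2', hcomm]
    have hNN : ∀ s ∈ Set.Ioo a b, (inner ℝ (N s) (N s) : ℝ) = κ s ^ 2 - τ s * (inner ℝ (T s) (B s) : ℝ) := by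
      intro s hs
      have hd := HasDerivAt.inner ℝ (hT s hs) (hN s hs)
      have he : (fun t => (inner ℝ (T t) (N t) : ℝ)) =ᶠ[nhds s] fun _ => 0 :=
        Filter.eventuallyEq_of_mem (hIopen.mem_nhds hs) (fun t ht => hTN t ht)
      have h0 : HasDerivAt (fun t => (inner ℝ (T t) (N t) : ℝ)) 0 s :=
        (hasDerivAt_const s (0 : ℝ)).congr_of_eventuallyEq he
      have huniq := hd.unique h0
      simp only [inner_add_right, inner_smul_right, hTT s hs, hTN s hs] at huniq
      have h2' : -(κ s ^ 2) * 1 + (κ' s / κ s) * 0 + τ s * (inner ℝ (T s) (B s) : ℝ) +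
          (inner ℝ (N s) (N s) : ℝ) = 0 := huniq
      linarith [h2']
    -- `τ/κ` has derivative zero where `B ≠ 0`
    set f : ℝ → ℝ := fun t => τ t / κ t with hf_def
    have hfd : ∀ s ∈ Set.Ioo a b,
        HasDerivAt f ((τ' s * κ s - τ s * κ' s) / κ s ^ 2) s :=
      fun s hs => (hτ s hs).div (hκ s hs) (hκpos s hs).ne'
    have hf0 : ∀ s ∈ Set.Ioo a b, B s ≠ 0 → HasDerivAt f 0 s := by
      intro s hs hBne
      have hgz : τ' s * κ s - τ s * κ' s = 0 := by
        rcases smul_eq_zero.mp (hg s hs) with h' | h'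
        · exact h'
        · exact absurd h' hBne
      simpa [hgz] using hfd s hs
    have hf : ∀ s ∈ Set.Ioo a b, HasDerivAt f 0 s := by
      intro s hs
      by_cases hBz : B s = 0
      · -- zeros of B are isolated, so f is locally constant near s
        have hN0 : N s ≠ 0 := by
          intro hN0
          have hnn := hNN s hs
          rw [hBz, hN0] at hnn
          simp only [inner_zero_left, inner_zero_right, mul_zero, sub_zero] at hnn
          exact (hκpos s hs).ne' (by nlinarith)
        have hL : -τ s • N s + (κ' s / κ s) • B s ≠ 0 := by
          rw [hBz, smul_zero, add_zero]
          exact smul_ne_zero (neg_ne_zero.mpr (hτ0 s hs)) hN0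
        have hslope : Filter.Tendsto (slope B s) (nhdsWithin s {s}ᶜ)
            (nhds (-τ s • N s + (κ' s / κ s) • B s)) :=
          hasDerivAt_iff_tendsto_slope.mp (hB s hs)
        have hev : ∀ᶠ t in nhdsWithin s {s}ᶜ, B t ≠ 0 := by
          filter_upwards [hslope.eventually_ne hL] with t ht hBt
          apply ht
          simp [slope, hBt, hBz]
        have hev' : ∀ᶠ t in nhds s, t ∈ Set.Ioo a b ∧ (t ≠ s → B t ≠ 0) := by
          have h1 : ∀ᶠ t in nhds s, t ≠ s → B t ≠ 0 := by
            rw [eventually_nhdsWithin_iff] at hev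
            filter_upwards [hev] with t ht h'; exact ht h'
          filter_upwards [hIopen.eventually_mem hs, h1] with t ht1 ht2
          exact ⟨ht1, ht2⟩
        obtain ⟨ε, hε, hprop⟩ := Metric.eventually_nhds_iff.mp hev'
        have hconst : ∀ t, dist t s < ε → f t = f s := by
          intro t ht
          rcases lt_trichotomy t s with hlt | heq | hgt
          · -- t < s
            have hstep : ∀ u ∈ Set.Ioo t s, f u = f t := by
              intro u hu
              have hmem : ∀ x ∈ Set.Icc t u, dist x s < ε := by
                intro x hx
                rw [Real.dist_eq, abs_lt]
                rw [Real.dist_eq, abs_lt] at ht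
                constructor
                · linarith [hx.1, ht.1]
                · linarith [hx.2, hu.2]
              have := constant_of_has_deriv_right_zero (f := f) (a := t) (b := u)
                (fun x hx => ((hfd x (hprop (hmem x hx)).1).continuousAt.continuousWithinAt))
                (fun x hx => by
                  have hxlt : x < s := lt_of_le_of_lt hx.2.le hu.2
                  have hx' := hprop (hmem x ⟨hx.1, hx.2.le⟩)
                  exact (hf0 x hx'.1 (hx'.2 hxlt.ne)).hasDerivWithinAt)
              exact this u (Set.right_mem_Icc.mpr hu.1.le)
            have hc1 : Filter.Tendsto f (nhdsWithin s (Set.Iio s)) (nhds (f s)) :=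
              ((hfd s hs).continuousAt.continuousWithinAt)
            have he2 : f =ᶠ[nhdsWithin s (Set.Iio s)] fun _ => f t :=
              Filter.eventuallyEq_of_mem (Ioo_mem_nhdsLT hlt)
                (fun u hu => hstep u hu)
            have hc2 : Filter.Tendsto f (nhdsWithin s (Set.Iio s)) (nhds (f t)) :=
              Filter.Tendsto.congr' he2.symm tendsto_const_nhds
            exact (tendsto_nhds_unique hc2 hc1).symm ▸ rfl
          · rw [heq]
          · -- s < t
            have hstep : ∀ u ∈ Set.Ioo s t, f t = f u := by
              intro u hu
              have hmem : ∀ x ∈ Set.Icc u t, dist x s < ε := by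
                intro x hx
                rw [Real.dist_eq, abs_lt]
                rw [Real.dist_eq, abs_lt] at ht
                constructor
                · linarith [hx.1, hu.1]
                · linarith [hx.2, ht.2]
              have := constant_of_has_deriv_right_zero (f := f) (a := u) (b := t)
                (fun x hx => ((hfd x (hprop (hmem x hx)).1).continuousAt.continuousWithinAt))
                (fun x hx => by
                  have hxgt : s < x := lt_of_lt_of_le hu.1 hx.1
                  have hx' := hprop (hmem x ⟨hx.1, hx.2.le⟩)
                  exact (hf0 x hx'.1 (hx'.2 hxgt.ne')).hasDerivWithinAt)
              exact this t (Set.right_mem_Icc.mpr hu.2.le)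
            have hc1 : Filter.Tendsto f (nhdsWithin s (Set.Ioi s)) (nhds (f s)) :=
              ((hfd s hs).continuousAt.continuousWithinAt)
            have he2 : f =ᶠ[nhdsWithin s (Set.Ioi s)] fun _ => f t :=
              Filter.eventuallyEq_of_mem (Ioo_mem_nhdsGT hgt)
                (fun u hu => (hstep u hu).symm)
            have hc2 : Filter.Tendsto f (nhdsWithin s (Set.Ioi s)) (nhds (f t)) :=
              Filter.Tendsto.congr' he2.symm tendsto_const_nhds
            exact (tendsto_nhds_unique hc2 hc1).symm ▸ rfl
        have hfe : f =ᶠ[nhds s] fun _ => f s :=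
          Metric.eventually_nhds_iff.mpr ⟨ε, hε, fun {x} hx => hconst x hx⟩
        exact (hasDerivAt_const s (f s)).congr_of_eventuallyEq hfe
      · exact hf0 s hs hBz
    -- f is constant on the interval
    have hglob : ∀ x ∈ Set.Ioo a b, ∀ y ∈ Set.Ioo a b, x ≤ y → f y = f x := by
      intro x hx y hy hxy
      have hsub : Set.Icc x y ⊆ Set.Ioo a b := fun z hz =>
        ⟨lt_of_lt_of_le hx.1 hz.1, lt_of_le_of_lt hz.2 hy.2⟩
      have := constant_of_has_deriv_right_zero (f := f) (a := x) (b := y)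
        (fun z hz => (hfd z (hsub hz)).continuousAt.continuousWithinAt)
        (fun z hz => (hf z (hsub ⟨hz.1, hz.2.le⟩)).hasDerivWithinAt)
      exact this y (Set.right_mem_Icc.mpr hxy)
    have hm : (a + b) / 2 ∈ Set.Ioo a b := ⟨by linarith, by linarith⟩
    refine ⟨f ((a + b) / 2), ?_⟩
    intro s hs
    have hfs : f s = f ((a + b) / 2) := by
      rcases le_total s ((a + b) / 2) with h' | h'
      · exact (hglob s hs _ hm h').symm
      · exact hglob _ hm s hs h'
    have : τ s / κ s = f ((a + b) / 2) := hfs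
    rw [div_eq_iff (hκpos s hs).ne'] at this
    rw [this, mul_comm]
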